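/- For positive reals φ, ψ and β ∈ ℝ \ {0,1}, define s_β(φ,ψ) := (1/(β−1))·(φ^β − φ·ψ^(β−1)) − (1/β)·(φ^β − ψ^β). Then the limit as β → 0 of s_β(φ,ψ) equals log(ψ) − log(φ) + φ/ψ − 1 (the Itakura–Saito integrand). -/

import Mathlib

open Filter Topology

theorem scalar_beta_divergence_tendsto_IS (φ ψ : ℝ) (hφ : 0 < φ) (hψ : 0 < ψ) :
    Tendsto (fun β : ℝ =>
        (1 / (β - 1)) * (φ ^ β - φ * ψ ^ (β - 1)) - (1 / β) * (φ ^ β - ψ ^ β))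
      (𝓝[≠] 0) (𝓝 (Real.log ψ - Real.log φ + φ / ψ - 1)) := by
  have h1 : Tendsto (fun β : ℝ => (1 / (β - 1)) * (φ ^ β - φ * ψ ^ (β - 1)))
      (𝓝[≠] 0) (𝓝 (φ / ψ - 1)) := by
    have hc : ContinuousAt (fun β : ℝ => (1 / (β - 1)) * (φ ^ β - φ * ψ ^ (β - 1))) 0 := by
      apply ContinuousAt.mul
      · exact continuousAt_const.div (continuousAt_id.sub continuousAt_const) (by norm_num)
      · exact (Real.continuousAt_const_rpow hφ.ne').sub
          (continuousAt_const.mul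
            ((Real.continuousAt_const_rpow hψ.ne').comp (continuousAt_id.sub continuousAt_const)))
    have h := (hc.continuousWithinAt (s := {(0:ℝ)}ᶜ)).tendsto
    simp only [Real.rpow_zero, zero_sub, Real.rpow_neg_one] at h
    convert h using 2
    field_simp
    ring
  have hd : HasDerivAt (fun β : ℝ => φ ^ β - ψ ^ β) (Real.log φ - Real.log ψ) 0 := by
    have h1 := (Real.hasStrictDerivAt_const_rpow hφ 0).hasDerivAt
    have h2 := (Real.hasStrictDerivAt_const_rpow hψ 0).hasDerivAt
    have := h1.sub h2
    simp only [Real.rpow_zero, one_mul] at this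
    exact this
  have h2 : Tendsto (fun β : ℝ => (1 / β) * (φ ^ β - ψ ^ β))
      (𝓝[≠] 0) (𝓝 (Real.log φ - Real.log ψ)) := by
    have := hasDerivAt_iff_tendsto_slope.mp hd
    refine this.congr fun β => ?_
    simp [slope_def_field, div_eq_inv_mul]
  have := h1.sub h2
  convert this using 2
  ring
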